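/- For each of the three fields F = ℚ(√(−(2 + √2))), F = ℚ(√(−(13 + 2√13))) and F = ℚ(√(−(29 + 2√29))), there is exactly one prime ideal of the ring of integers O_F lying above the rational prime 2. -/

import Mathlib

open IntermediateField NumberField

noncomputable section

/-- `β = i·√(D + B√D)` (positive real square roots). -/
def qβ (B D : ℕ) : ℂ :=
  Complex.I * ((Real.sqrt ((D : ℝ) + (B : ℝ) * Real.sqrt (D : ℝ)) : ℝ) : ℂ)

/-- The imaginary cyclic quartic field `F = ℚ(β) = ℚ(√(−(D + B√D))) ⊆ ℂ`. -/
def qF (B D : ℕ) : IntermediateField ℚ ℂ := ℚ⟮qβ B D⟯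

/-- `P` is a prime ideal of `O_F` lying above the rational prime `2`,
i.e. `P ∩ ℤ = 2ℤ`. -/
def LiesAboveTwo {B D : ℕ} (P : Ideal (𝓞 (qF B D))) : Prop :=
  P.IsPrime ∧ Ideal.comap (algebraMap ℤ (𝓞 (qF B D))) P = Ideal.span {(2 : ℤ)}

open Polynomial

set_option maxHeartbeats 1000000
set_option synthInstance.maxHeartbeats 400000

/-! ### Generic ring-theoretic helpers -/

/-- An ideal whose quotient has exactly two elements is maximal. -/
lemma isMaximal_of_card_quot_eq_two {R : Type*} [CommRing R] {I : Ideal R}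
    (h : Nat.card (R ⧸ I) = 2) : I.IsMaximal := by
  have hfin : Finite (R ⧸ I) := Nat.finite_of_card_ne_zero (by omega)
  have hnt : Nontrivial (R ⧸ I) := Finite.one_lt_card_iff_nontrivial.mp (by omega)
  apply Ideal.Quotient.maximal_of_isField
  obtain ⟨x, y, hxy, hU⟩ := Nat.card_eq_two_iff.mp h
  have hall : ∀ a : R ⧸ I, a = x ∨ a = y := by
    intro a
    have : a ∈ ({x, y} : Set (R ⧸ I)) := hU ▸ Set.mem_univ a
    simpa using this
  refine ⟨⟨1, 0, one_ne_zero⟩, mul_comm, ?_⟩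
  intro a ha
  have h1 : a = 1 := by
    rcases hall a with h1 | h1 <;> rcases hall 0 with h2 | h2 <;>
        rcases hall (1 : R ⧸ I) with h3 | h3 <;>
      (try (exfalso; exact zero_ne_one (h2.trans h3.symm))) <;>
      (try (exfalso; exact ha (h1.trans h2.symm))) <;>
      exact h1.trans h3.symm
  exact ⟨1, by rw [h1, one_mul]⟩

/-- `X^4 + X + 1` is irreducible over `𝔽₂`. -/
lemma irreducible_X4_X_1 : Irreducible (X ^ 4 + X + 1 : (ZMod 2)[X]) := by
  have hlt : (X + 1 : (ZMod 2)[X]).degree < (X ^ 4 : (ZMod 2)[X]).degree := by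
    rw [degree_X_pow]
    calc (X + 1 : (ZMod 2)[X]).degree ≤ 1 := by
          simpa using degree_X_add_C (1 : ZMod 2) ▸ le_refl _
      _ < 4 := by norm_num
  have hmon : (X ^ 4 + X + 1 : (ZMod 2)[X]).Monic := by
    rw [add_assoc]
    exact (monic_X_pow 4).add_of_left hlt
  have hdeg : (X ^ 4 + X + 1 : (ZMod 2)[X]).natDegree = 4 := by
    rw [add_assoc]
    apply natDegree_eq_of_degree_eq_some
    rw [degree_add_eq_left_of_degree_lt hlt, degree_X_pow]
  have hne1 : (X ^ 4 + X + 1 : (ZMod 2)[X]) ≠ 1 := fun hh => by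
    have := congrArg natDegree hh
    rw [hdeg, natDegree_one] at this
    exact absurd this (by norm_num)
  have hnoroot : ∀ a : ZMod 2, (X ^ 4 + X + 1 : (ZMod 2)[X]).eval a ≠ 0 := by
    intro a
    simp only [eval_add, eval_pow, eval_X, eval_one]
    revert a; decide
  -- helper: a monic quadratic divisor with no roots must be X^2+X+1
  have hquad : ∀ q : (ZMod 2)[X], q.Monic → q.natDegree = 2 →
      (∀ a : ZMod 2, q.eval a ≠ 0) → q = X ^ 2 + X + 1 := by
    intro q hq hq2 hqr
    have hq0 : q ≠ 0 := hq.ne_zero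
    have hdq : q.degree = 2 := by rw [degree_eq_natDegree hq0, hq2]; simp
    have hsub : (q - X ^ 2).degree < 2 := by
      have := degree_sub_lt (p := q) (q := X ^ 2) (by rw [hdq, degree_X_pow]; rfl) hq0
        (by rw [hq.leadingCoeff, (monic_X_pow 2 (R := ZMod 2)).leadingCoeff])
      rwa [hdq] at this
    have hle : (q - X ^ 2).degree ≤ 1 := by
      by_cases h0 : q - X ^ 2 = 0
      · simp [h0]
      · rw [degree_eq_natDegree h0] at hsub ⊢
        exact_mod_cast Nat.lt_succ_iff.mp (by exact_mod_cast hsub)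
    have heq : q - X ^ 2 = C ((q - X ^ 2).coeff 1) * X + C ((q - X ^ 2).coeff 0) :=
      eq_X_add_C_of_degree_le_one hle
    set b := (q - X ^ 2).coeff 1 with hbdef
    set c := (q - X ^ 2).coeff 0 with hcdef
    have hqe : q = X ^ 2 + (C b * X + C c) := by
      rw [← heq]; ring
    have hb : b = 0 ∨ b = 1 := by generalize b = z; revert z; decide
    have hc : c = 0 ∨ c = 1 := by generalize c = z; revert z; decide
    rcases hb with hb | hb <;> rcases hc with hc | hc
    · exfalso; apply hqr 0; rw [hqe, hb, hc]; simp
    · exfalso; apply hqr 1; rw [hqe, hb, hc]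
      simp only [eval_add, eval_mul, eval_pow, eval_X, eval_C]
      decide
    · exfalso; apply hqr 0; rw [hqe, hb, hc]; simp
    · rw [hqe, hb, hc]; simp only [map_one]; ring
  rw [hmon.irreducible_iff_natDegree']
  refine ⟨hne1, ?_⟩
  rintro p q hp hq hpq hmem
  rw [hdeg] at hmem
  simp only [Finset.mem_Ioc] at hmem
  obtain ⟨hmem1, hmem2⟩ := hmem
  have hqr : ∀ a : ZMod 2, q.eval a ≠ 0 := by
    intro a ha
    apply hnoroot a
    rw [← hpq, eval_mul, ha, mul_zero]
  interval_cases hqd : q.natDegree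
  · -- degree 1
    obtain ⟨c0, hform⟩ : ∃ c0, q = X + C c0 := ⟨q.coeff 0, hq.eq_X_add_C hqd⟩
    apply hqr c0
    rw [hform]
    simp only [eval_add, eval_X, eval_C]
    exact (by decide : ∀ z : ZMod 2, z + z = 0) c0
  · -- degree 2
    have hqform := hquad q hq hqd hqr
    have hnd4 : p.natDegree + q.natDegree = 4 := by
      have := congrArg natDegree hpq
      rwa [hp.natDegree_mul hq, hdeg] at this
    have hpd : p.natDegree = 2 := by omega
    have hpr : ∀ a : ZMod 2, p.eval a ≠ 0 := by
      intro a ha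
      apply hnoroot a
      rw [← hpq, eval_mul, ha, zero_mul]
    have hpform := hquad p hp hpd hpr
    rw [hpform, hqform] at hpq
    have h2 : (1 + 1 : (ZMod 2)[X]) = 0 := by
      rw [← Polynomial.C_1, ← Polynomial.C_add, show (1 + 1 : ZMod 2) = 0 by decide,
        Polynomial.C_0]
    have hsq : (X ^ 2 + X + 1 : (ZMod 2)[X]) * (X ^ 2 + X + 1) = X ^ 4 + X ^ 2 + 1 := by
      linear_combination (X ^ 3 + X ^ 2 + X : (ZMod 2)[X]) * h2
    rw [hsq] at hpq
    have hco := congrArg (fun r => Polynomial.coeff r 1) hpq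
    simp only [coeff_add, coeff_X_pow, coeff_one, coeff_X] at hco
    norm_num at hco

/-- If `R/I` has 16 elements, `2 ∈ I`, and some `γ : R` is a root of a monic
integer quartic that is irreducible mod 2, then `I` is maximal. -/
lemma isMaximal_of_quartic {R : Type*} [CommRing R] {I : Ideal R}
    (hcard : Nat.card (R ⧸ I) = 16) (h2 : (2 : R) ∈ I) (γ : R) (f : ℤ[X])
    (hmon : f.Monic) (hdeg : f.natDegree = 4) (hev : Polynomial.aeval γ f = 0)
    (hirr : Irreducible (f.map (Int.castRingHom (ZMod 2)))) : I.IsMaximal := by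
  have hfin : Finite (R ⧸ I) := Nat.finite_of_card_ne_zero (by omega)
  have hnt : Nontrivial (R ⧸ I) := Finite.one_lt_card_iff_nontrivial.mp (by omega)
  have h20 : (2 : R ⧸ I) = 0 := by
    have : Ideal.Quotient.mk I (2 : R) = 0 := Ideal.Quotient.eq_zero_iff_mem.mpr h2
    rwa [map_ofNat] at this
  have hchar : CharP (R ⧸ I) 2 := by
    constructor
    intro x
    constructor
    · intro hx
      rcases Nat.even_or_odd x with ⟨k, rfl⟩ | ⟨k, rfl⟩
      · exact ⟨k, by omega⟩
      · exfalso
        push_cast at hx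
        rw [h20] at hx
        simp at hx
    · rintro ⟨k, rfl⟩
      push_cast
      rw [h20]
      ring
  set fbar := f.map (Int.castRingHom (ZMod 2)) with hfbar
  haveI : Fact (Irreducible fbar) := ⟨hirr⟩
  have hfbne : fbar ≠ 0 := hirr.ne_zero
  have hfbdeg : fbar.natDegree = 4 := by rw [hfbar, hmon.natDegree_map, hdeg]
  have heval : fbar.eval₂ (ZMod.castHom (dvd_refl 2) (R ⧸ I)) (Ideal.Quotient.mk I γ) = 0 := by
    rw [hfbar, eval₂_map]
    have hcomp : (ZMod.castHom (dvd_refl 2) (R ⧸ I)).comp (Int.castRingHom (ZMod 2)) =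
        Int.castRingHom (R ⧸ I) := Subsingleton.elim _ _
    rw [hcomp]
    have h1 : f.eval₂ (Int.castRingHom (R ⧸ I)) (Ideal.Quotient.mk I γ) =
        Polynomial.aeval (Ideal.Quotient.mk I γ) f := rfl
    rw [h1, show Ideal.Quotient.mk I γ = (Ideal.Quotient.mkₐ ℤ I) γ from rfl,
      Polynomial.aeval_algHom_apply, hev, map_zero]
  set φ : AdjoinRoot fbar →+* R ⧸ I :=
    AdjoinRoot.lift (ZMod.castHom (dvd_refl 2) (R ⧸ I)) (Ideal.Quotient.mk I γ) heval with hφ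
  have hinj : Function.Injective φ := φ.injective
  have hcardK : Nat.card (AdjoinRoot fbar) = 16 := by
    have hdim : (AdjoinRoot.powerBasis hfbne).dim = 4 := hfbdeg
    have hcongr : Nat.card (AdjoinRoot fbar) =
        Nat.card (Fin (AdjoinRoot.powerBasis hfbne).dim → ZMod 2) :=
      Nat.card_congr (AdjoinRoot.powerBasis hfbne).basis.equivFun.toEquiv
    rw [hcongr, hdim]
    simp [Nat.card_eq_fintype_card]
  have hbij : Function.Bijective φ := by
    haveI : Finite (AdjoinRoot fbar) := Nat.finite_of_card_ne_zero (by omega)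
    haveI : Fintype (AdjoinRoot fbar) := Fintype.ofFinite _
    haveI : Fintype (R ⧸ I) := Fintype.ofFinite _
    refine (Fintype.bijective_iff_injective_and_card φ).mpr ⟨hinj, ?_⟩
    rw [← Nat.card_eq_fintype_card, ← Nat.card_eq_fintype_card, hcardK, hcard]
  apply Ideal.Quotient.maximal_of_isField
  refine ⟨⟨1, 0, one_ne_zero⟩, mul_comm, ?_⟩
  intro a ha
  obtain ⟨k, rfl⟩ := hbij.surjective a
  have hk : k ≠ 0 := fun hk => ha (by rw [hk, map_zero])
  exact ⟨φ k⁻¹, by rw [← map_mul, mul_inv_cancel₀ hk, map_one]⟩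

/-! ### Glue: from a maximal ideal containing 2 with a uniqueness property to the statement -/

lemma existsUnique_liesAboveTwo {B D : ℕ} (M : Ideal (𝓞 (qF B D))) (hM : M.IsMaximal)
    (h2 : (2 : 𝓞 (qF B D)) ∈ M)
    (hle : ∀ P : Ideal (𝓞 (qF B D)), P.IsPrime → (2 : 𝓞 (qF B D)) ∈ P → M ≤ P) :
    ∃! P : Ideal (𝓞 (qF B D)), LiesAboveTwo P := by
  have halg : algebraMap ℤ (𝓞 (qF B D)) 2 = 2 := map_ofNat _ 2
  refine ⟨M, ⟨hM.isPrime, ?_⟩, ?_⟩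
  · have hmax2 : (Ideal.span {(2 : ℤ)}).IsMaximal :=
      PrincipalIdealRing.isMaximal_of_irreducible Int.prime_two.irreducible
    have hsub : Ideal.span {(2 : ℤ)} ≤ Ideal.comap (algebraMap ℤ (𝓞 (qF B D))) M := by
      rw [Ideal.span_le, Set.singleton_subset_iff]
      simp only [SetLike.mem_coe, Ideal.mem_comap, halg]
      exact h2
    have hne : Ideal.comap (algebraMap ℤ (𝓞 (qF B D))) M ≠ ⊤ := by
      intro h
      have h1 : (1 : ℤ) ∈ Ideal.comap (algebraMap ℤ (𝓞 (qF B D))) M := h ▸ Submodule.mem_top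
      simp only [Ideal.mem_comap, map_one] at h1
      exact hM.ne_top ((Ideal.eq_top_iff_one _).mpr h1)
    exact (hmax2.eq_of_le hne hsub).symm
  · rintro P ⟨hP, hPcomap⟩
    have h2P : (2 : 𝓞 (qF B D)) ∈ P := by
      have hmem : (2 : ℤ) ∈ Ideal.comap (algebraMap ℤ (𝓞 (qF B D))) P := by
        rw [hPcomap]; exact Ideal.mem_span_singleton_self 2
      rw [Ideal.mem_comap, halg] at hmem
      exact hmem
    exact (hM.eq_of_le hP.ne_top (hle P hP h2P)).symm

/-! ### Basic facts about `qβ` -/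

lemma qβ_sq (B D : ℕ) : (qβ B D) ^ 2 = -((D : ℂ) + (B : ℂ) * ((Real.sqrt D : ℝ) : ℂ)) := by
  unfold qβ
  rw [mul_pow, Complex.I_sq, ← Complex.ofReal_pow,
    Real.sq_sqrt (by positivity : (0:ℝ) ≤ (D : ℝ) + (B : ℝ) * Real.sqrt (D : ℝ))]
  push_cast
  ring

lemma sqrtD_sq (D : ℕ) : (((Real.sqrt D : ℝ)) : ℂ) ^ 2 = (D : ℂ) := by
  rw [← Complex.ofReal_pow, Real.sq_sqrt (by positivity : (0:ℝ) ≤ (D:ℝ))]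
  push_cast
  ring

/-- the canonical generator of `qF B D` -/
def qgen (B D : ℕ) : qF B D := AdjoinSimple.gen ℚ (qβ B D)

lemma coe_qgen (B D : ℕ) : (algebraMap (qF B D) ℂ) (qgen B D) = qβ B D :=
  AdjoinSimple.algebraMap_gen ℚ _

/-! ### Eisenstein quartics -/

lemma quartic_monic_natDegree {R : Type*} [CommRing R] [Nontrivial R] {q : R[X]}
    (hq : q.degree < ((4 : ℕ) : WithBot ℕ)) :
    (X ^ 4 + q).Monic ∧ (X ^ 4 + q).natDegree = 4 := by
  have h4 : ((X : R[X]) ^ 4).degree = ((4 : ℕ) : WithBot ℕ) := degree_X_pow 4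
  have hlt : q.degree < ((X : R[X]) ^ 4).degree := by rw [h4]; exact hq
  refine ⟨(monic_X_pow 4).add_of_left hlt, ?_⟩
  apply natDegree_eq_of_degree_eq_some
  rw [degree_add_eq_left_of_degree_lt hlt, h4]

lemma quad_degree_lt {R : Type*} [CommRing R] [Nontrivial R] (a c : R) :
    (C a * X ^ 2 + C c).degree < ((4 : ℕ) : WithBot ℕ) := by
  apply lt_of_le_of_lt (degree_add_le _ _)
  rw [max_lt_iff]
  constructor
  · exact lt_of_le_of_lt (degree_C_mul_X_pow_le 2 a) (by exact_mod_cast (by norm_num : (2:ℕ) < 4))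
  · exact lt_of_le_of_lt degree_C_le (by exact_mod_cast (by norm_num : (0:ℕ) < 4))

lemma lin_degree_lt {R : Type*} [CommRing R] [Nontrivial R] (e c : R) :
    (C e * X + C c).degree < ((4 : ℕ) : WithBot ℕ) := by
  apply lt_of_le_of_lt (degree_add_le _ _)
  rw [max_lt_iff]
  constructor
  · exact lt_of_le_of_lt (degree_C_mul_X_le e) (by exact_mod_cast (by norm_num : (1:ℕ) < 4))
  · exact lt_of_le_of_lt degree_C_le (by exact_mod_cast (by norm_num : (0:ℕ) < 4))

lemma eisenstein_quartic {a c p : ℤ} (hp : Prime p) (hpa : p ∣ a) (hpc : p ∣ c)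
    (hpc2 : ¬ (p ^ 2 ∣ c)) : Irreducible (X ^ 4 + (C a * X ^ 2 + C c) : ℤ[X]) := by
  obtain ⟨hmon, hdeg⟩ := quartic_monic_natDegree (quad_degree_lt a c)
  have hdegree : (X ^ 4 + (C a * X ^ 2 + C c) : ℤ[X]).degree = ((4:ℕ) : WithBot ℕ) := by
    rw [degree_eq_natDegree hmon.ne_zero, hdeg]
  apply Polynomial.irreducible_of_eisenstein_criterion
    ((Ideal.span_singleton_prime hp.ne_zero).mpr hp)
  · rw [hmon.leadingCoeff, Ideal.mem_span_singleton]
    exact fun h => hp.not_unit (isUnit_of_dvd_one h)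
  · intro n hn
    rw [hdegree] at hn
    have hn4 : n < 4 := by exact_mod_cast hn
    interval_cases n <;>
        simp only [coeff_add, coeff_C_mul, coeff_X_pow, coeff_C, Ideal.mem_span_singleton] <;>
        norm_num <;>
      first
        | exact hpc
        | exact hpa
  · rw [hdegree]; exact_mod_cast (by norm_num : (0:ℕ) < 4)
  · rw [Ideal.span_singleton_pow, Ideal.mem_span_singleton]
    intro h
    apply hpc2
    have : (X ^ 4 + (C a * X ^ 2 + C c) : ℤ[X]).coeff 0 = c := by
      simp only [coeff_add, coeff_C_mul, coeff_X_pow, coeff_C]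
      norm_num
    rwa [this] at h
  · exact hmon.isPrimitive

/-! ### Field-level plumbing -/

variable {B D : ℕ} {fm : ℤ[X]}

lemma isIntegralQ (hmon : fm.Monic) (hroot : Polynomial.aeval (qβ B D) fm = 0) :
    IsIntegral ℚ (qβ B D) :=
  ⟨fm.map (algebraMap ℤ ℚ), hmon.map _, by
    rw [← Polynomial.aeval_def, Polynomial.aeval_map_algebraMap]; exact hroot⟩

lemma minpoly_qβ (hmon : fm.Monic) (hirr : Irreducible fm)
    (hroot : Polynomial.aeval (qβ B D) fm = 0) :
    minpoly ℚ (qβ B D) = fm.map (algebraMap ℤ ℚ) :=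
  ((minpoly.eq_of_irreducible_of_monic
    ((hmon.irreducible_iff_irreducible_map_fraction_map (K := ℚ)).mp hirr)
    (show Polynomial.aeval (qβ B D) (fm.map (algebraMap ℤ ℚ)) = 0 by
      rw [Polynomial.aeval_map_algebraMap]; exact hroot) (hmon.map _))).symm

lemma finrank_qF (hmon : fm.Monic) (hdeg : fm.natDegree = 4) (hirr : Irreducible fm)
    (hroot : Polynomial.aeval (qβ B D) fm = 0) :
    Module.finrank ℚ (qF B D) = 4 := by
  have hint : IsIntegral ℚ (qβ B D) := isIntegralQ hmon hroot
  have h := IntermediateField.adjoin.finrank hint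
  rw [minpoly_qβ hmon hirr hroot, hmon.natDegree_map (algebraMap ℤ ℚ), hdeg] at h
  exact h

lemma aeval_qgen (hmon : fm.Monic) (hroot : Polynomial.aeval (qβ B D) fm = 0) :
    Polynomial.aeval (qgen B D) fm = 0 := by
  apply (algebraMap (qF B D) ℂ).injective
  rw [map_zero, ← Polynomial.aeval_algebraMap_apply, coe_qgen]
  exact hroot

/-! ### The inert cases -/

lemma inert_existsUnique (B D : ℕ) (fm fγ : ℤ[X])
    (hmonm : fm.Monic) (hdegm : fm.natDegree = 4) (hirrm : Irreducible fm)
    (hrootm : Polynomial.aeval (qβ B D) fm = 0)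
    (hmonγ : fγ.Monic) (hdegγ : fγ.natDegree = 4)
    (hirrγ : Irreducible (fγ.map (Int.castRingHom (ZMod 2))))
    (γ : qF B D) (hrootγ : Polynomial.aeval γ fγ = 0) :
    ∃! P : Ideal (𝓞 (qF B D)), LiesAboveTwo P := by
  have hint : IsIntegral ℚ (qβ B D) := isIntegralQ hmonm hrootm
  haveI : FiniteDimensional ℚ (qF B D) := IntermediateField.adjoin.finiteDimensional hint
  haveI : NumberField (qF B D) := ⟨⟩
  have hfr : Module.finrank ℚ (qF B D) = 4 := finrank_qF hmonm hdegm hirrm hrootm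
  have hγint : IsIntegral ℤ γ := ⟨fγ, hmonγ, by rw [← Polynomial.aeval_def]; exact hrootγ⟩
  set γO : 𝓞 (qF B D) := ⟨γ, hγint⟩ with hγO
  have hγOev : Polynomial.aeval γO fγ = 0 := by
    apply RingOfIntegers.coe_injective
    rw [map_zero, ← Polynomial.aeval_algebraMap_apply]
    exact hrootγ
  have hcard : Nat.card ((𝓞 (qF B D)) ⧸ (Ideal.span {(2 : 𝓞 (qF B D))})) = 16 := by
    have habs : Ideal.absNorm (Ideal.span {(2 : 𝓞 (qF B D))}) = 16 := by
      rw [Ideal.absNorm_span_singleton,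
        show (2 : 𝓞 (qF B D)) = algebraMap ℤ _ (2 : ℤ) from (map_ofNat _ 2).symm,
        Algebra.norm_algebraMap_of_basis (Module.Free.chooseBasis ℤ (𝓞 (qF B D))),
        ← Module.finrank_eq_card_chooseBasisIndex, RingOfIntegers.rank (qF B D), hfr]
      norm_num
    have hq : Ideal.absNorm (Ideal.span {(2 : 𝓞 (qF B D))}) =
        Nat.card ((𝓞 (qF B D)) ⧸ (Ideal.span {(2 : 𝓞 (qF B D))})) := by
      rw [Ideal.absNorm_apply, Submodule.cardQuot_apply]
    rw [← hq]
    exact habs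
  have hmax : (Ideal.span {(2 : 𝓞 (qF B D))}).IsMaximal :=
    isMaximal_of_quartic hcard (Ideal.mem_span_singleton_self _) γO fγ hmonγ hdegγ hγOev hirrγ
  exact existsUnique_liesAboveTwo _ hmax (Ideal.mem_span_singleton_self _)
    (fun P hP h2P => by rwa [Ideal.span_le, Set.singleton_subset_iff])

/-! ### The ramified case B = 1, D = 2 -/

lemma ram_existsUnique : ∃! P : Ideal (𝓞 (qF 1 2)), LiesAboveTwo P := by
  set fm : ℤ[X] := X ^ 4 + (C 4 * X ^ 2 + C 2) with hfm
  obtain ⟨hmonm, hdegm⟩ := quartic_monic_natDegree (R := ℤ) (quad_degree_lt 4 2)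
  have hirrm : Irreducible fm :=
    eisenstein_quartic Int.prime_two (by norm_num) (by norm_num) (by norm_num)
  have hb : (qβ 1 2) ^ 2 = -(2 + ((Real.sqrt 2 : ℝ) : ℂ)) := by
    have h := qβ_sq 1 2
    push_cast at h
    simpa using h
  have hs : ((Real.sqrt 2 : ℝ) : ℂ) ^ 2 = 2 := by
    have h := sqrtD_sq 2
    push_cast at h
    simpa using h
  have hrootm : Polynomial.aeval (qβ 1 2) fm = 0 := by
    rw [hfm]
    simp only [map_add, map_mul, map_pow, map_ofNat, Polynomial.aeval_X, Polynomial.aeval_C, eq_intCast]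
    push_cast
    linear_combination (2 - ((Real.sqrt 2 : ℝ) : ℂ) + (qβ 1 2) ^ 2) * hb + hs
  have hgm : Polynomial.aeval (qgen 1 2) fm = 0 := aeval_qgen hmonm hrootm
  have hgK : (qgen 1 2) ^ 4 + 4 * (qgen 1 2) ^ 2 + 2 = 0 := by
    have h := hgm
    rw [hfm] at h
    simp only [map_add, map_mul, map_pow, map_ofNat, Polynomial.aeval_X, Polynomial.aeval_C,
      eq_intCast] at h
    push_cast at h
    linear_combination h
  have hint : IsIntegral ℚ (qβ 1 2) := isIntegralQ hmonm hrootm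
  haveI : FiniteDimensional ℚ (qF 1 2) := IntermediateField.adjoin.finiteDimensional hint
  haveI : NumberField (qF 1 2) := ⟨⟩
  have hgint : IsIntegral ℤ (qgen 1 2) :=
    ⟨fm, hmonm, by rw [← Polynomial.aeval_def]; exact hgm⟩
  set bO : 𝓞 (qF 1 2) := ⟨qgen 1 2, hgint⟩ with hbO
  have hminβ : minpoly ℚ (qβ 1 2) = fm.map (algebraMap ℤ ℚ) := minpoly_qβ hmonm hirrm hrootm
  have hming : minpoly ℚ (qgen 1 2) = fm.map (algebraMap ℤ ℚ) := by
    rw [← hminβ, ← coe_qgen 1 2, minpoly.algebraMap_eq (algebraMap (qF 1 2) ℂ).injective]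
  have hnormg : Algebra.norm ℚ (qgen 1 2) = 2 := by
    have hpb := Algebra.PowerBasis.norm_gen_eq_coeff_zero_minpoly
      (IntermediateField.adjoin.powerBasis hint)
    rw [IntermediateField.adjoin.powerBasis_gen,
      IntermediateField.minpoly_gen,
      IntermediateField.adjoin.powerBasis_dim, hminβ,
      hmonm.natDegree_map (algebraMap ℤ ℚ), hdegm, Polynomial.coeff_map] at hpb
    have hc0 : fm.coeff 0 = 2 := by
      rw [hfm]
      simp only [coeff_add, coeff_C_mul, coeff_X_pow, coeff_C]
      norm_num
    rw [hc0] at hpb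
    norm_num at hpb
    exact hpb
  have hnormZ : Algebra.norm ℤ bO = 2 := by
    have h := Algebra.coe_norm_int bO
    have h2 : Algebra.norm ℚ ((bO : 𝓞 (qF 1 2)) : qF 1 2) = 2 := hnormg
    rw [h2] at h
    exact_mod_cast h
  have hcard2 : Nat.card ((𝓞 (qF 1 2)) ⧸ (Ideal.span {bO})) = 2 := by
    have habs : Ideal.absNorm (Ideal.span {bO}) = 2 := by
      rw [Ideal.absNorm_span_singleton, hnormZ]
      rfl
    have hq : Ideal.absNorm (Ideal.span {bO}) =
        Nat.card ((𝓞 (qF 1 2)) ⧸ (Ideal.span {bO})) := by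
      rw [Ideal.absNorm_apply, Submodule.cardQuot_apply]
    rw [← hq]
    exact habs
  have hmax : (Ideal.span {bO}).IsMaximal := isMaximal_of_card_quot_eq_two hcard2
  have hident : (2 : 𝓞 (qF 1 2)) = bO ^ 4 * (2 * bO ^ 2 + 7) := by
    apply RingOfIntegers.coe_injective
    simp only [map_ofNat, map_mul, map_pow, map_add]
    show (2 : qF 1 2) = (qgen 1 2) ^ 4 * (2 * (qgen 1 2) ^ 2 + 7)
    linear_combination (1 - 2 * (qgen 1 2) ^ 2) * hgK
  have h2mem : (2 : 𝓞 (qF 1 2)) ∈ Ideal.span {bO} := by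
    rw [hident, Ideal.mem_span_singleton]
    exact ⟨bO ^ 3 * (2 * bO ^ 2 + 7), by ring⟩
  apply existsUnique_liesAboveTwo _ hmax h2mem
  intro P hP h2P
  have hprod : bO ^ 4 * (2 * bO ^ 2 + 7) ∈ P := hident ▸ h2P
  rcases hP.mem_or_mem hprod with h | h
  · have hbP : bO ∈ P := hP.mem_of_pow_mem 4 h
    rwa [Ideal.span_le, Set.singleton_subset_iff]
  · exfalso
    have h7 : (7 : 𝓞 (qF 1 2)) ∈ P := by
      have h' := P.sub_mem h (P.mul_mem_left (bO ^ 2) h2P)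
      have he : (2 * bO ^ 2 + 7) - bO ^ 2 * 2 = 7 := by ring
      rwa [he] at h'
    have h8 : (8 : 𝓞 (qF 1 2)) ∈ P := by
      have h' := P.mul_mem_left (4 : 𝓞 (qF 1 2)) h2P
      have he : (4 : 𝓞 (qF 1 2)) * 2 = 8 := by norm_num
      rwa [he] at h'
    have h1 : (1 : 𝓞 (qF 1 2)) ∈ P := by
      have h' := P.sub_mem h8 h7
      have he : (8 : 𝓞 (qF 1 2)) - 7 = 1 := by norm_num
      rwa [he] at h'
    exact hP.ne_top ((Ideal.eq_top_iff_one _).mpr h1)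

/-! ### The two inert cases -/

lemma case13_existsUnique : ∃! P : Ideal (𝓞 (qF 2 13)), LiesAboveTwo P := by
  set fm : ℤ[X] := X ^ 4 + (C 26 * X ^ 2 + C 117) with hfm
  obtain ⟨hmonm, hdegm⟩ := quartic_monic_natDegree (R := ℤ) (quad_degree_lt 26 117)
  have hirrm : Irreducible fm :=
    eisenstein_quartic (p := 13) (by norm_num) (by norm_num) (by norm_num) (by norm_num)
  have hb : (qβ 2 13) ^ 2 = -(13 + 2 * ((Real.sqrt 13 : ℝ) : ℂ)) := by
    have h := qβ_sq 2 13
    push_cast at h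
    simpa using h
  have hs : ((Real.sqrt 13 : ℝ) : ℂ) ^ 2 = 13 := by
    have h := sqrtD_sq 13
    push_cast at h
    simpa using h
  have hrootm : Polynomial.aeval (qβ 2 13) fm = 0 := by
    rw [hfm]
    simp only [map_add, map_mul, map_pow, map_ofNat, Polynomial.aeval_X, Polynomial.aeval_C,
      eq_intCast]
    push_cast
    linear_combination (13 - 2 * ((Real.sqrt 13 : ℝ) : ℂ) + (qβ 2 13) ^ 2) * hb + 4 * hs
  have hgm : Polynomial.aeval (qgen 2 13) fm = 0 := aeval_qgen hmonm hrootm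
  have hgK : (qgen 2 13) ^ 4 + 26 * (qgen 2 13) ^ 2 + 117 = 0 := by
    have h := hgm
    rw [hfm] at h
    simp only [map_add, map_mul, map_pow, map_ofNat, Polynomial.aeval_X, Polynomial.aeval_C,
      eq_intCast] at h
    push_cast at h
    linear_combination h
  set γ : qF 2 13 := -(qgen 2 13) ^ 2 / 4 + (qgen 2 13) / 2 - 13 / 4 with hγ
  set fγ : ℤ[X] := X ^ 4 + (C 13 * X + C 39) with hfγ
  obtain ⟨hmonγ, hdegγ⟩ := quartic_monic_natDegree (R := ℤ) (lin_degree_lt 13 39)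
  have hrootγ : Polynomial.aeval γ fγ = 0 := by
    rw [hfγ, hγ]
    simp only [map_add, map_mul, map_pow, map_ofNat, Polynomial.aeval_X, Polynomial.aeval_C,
      eq_intCast]
    push_cast
    linear_combination ((qgen 2 13) ^ 4 / 256 - (qgen 2 13) ^ 3 / 32 + 50 * (qgen 2 13) ^ 2 / 256
      - 136 * (qgen 2 13) / 256 + 237 / 256) * hgK
  have hmap : fγ.map (Int.castRingHom (ZMod 2)) = X ^ 4 + X + 1 := by
    rw [hfγ]
    simp only [Polynomial.map_add, Polynomial.map_mul, Polynomial.map_pow, Polynomial.map_X,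
      Polynomial.map_C]
    rw [show ((Int.castRingHom (ZMod 2)) 13 : ZMod 2) = 1 by decide,
      show ((Int.castRingHom (ZMod 2)) 39 : ZMod 2) = 1 by decide, Polynomial.C_1]
    ring
  have hirrγ2 : Irreducible (fγ.map (Int.castRingHom (ZMod 2))) := by
    rw [hmap]; exact irreducible_X4_X_1
  exact inert_existsUnique 2 13 fm fγ hmonm hdegm hirrm hrootm hmonγ hdegγ hirrγ2 γ hrootγ

lemma case29_existsUnique : ∃! P : Ideal (𝓞 (qF 2 29)), LiesAboveTwo P := by
  set fm : ℤ[X] := X ^ 4 + (C 58 * X ^ 2 + C 725) with hfm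
  obtain ⟨hmonm, hdegm⟩ := quartic_monic_natDegree (R := ℤ) (quad_degree_lt 58 725)
  have hirrm : Irreducible fm :=
    eisenstein_quartic (p := 29) (by norm_num) (by norm_num) (by norm_num) (by norm_num)
  have hb : (qβ 2 29) ^ 2 = -(29 + 2 * ((Real.sqrt 29 : ℝ) : ℂ)) := by
    have h := qβ_sq 2 29
    push_cast at h
    simpa using h
  have hs : ((Real.sqrt 29 : ℝ) : ℂ) ^ 2 = 29 := by
    have h := sqrtD_sq 29
    push_cast at h
    simpa using h
  have hrootm : Polynomial.aeval (qβ 2 29) fm = 0 := by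
    rw [hfm]
    simp only [map_add, map_mul, map_pow, map_ofNat, Polynomial.aeval_X, Polynomial.aeval_C,
      eq_intCast]
    push_cast
    linear_combination (29 - 2 * ((Real.sqrt 29 : ℝ) : ℂ) + (qβ 2 29) ^ 2) * hb + 4 * hs
  have hgm : Polynomial.aeval (qgen 2 29) fm = 0 := aeval_qgen hmonm hrootm
  have hgK : (qgen 2 29) ^ 4 + 58 * (qgen 2 29) ^ 2 + 725 = 0 := by
    have h := hgm
    rw [hfm] at h
    simp only [map_add, map_mul, map_pow, map_ofNat, Polynomial.aeval_X, Polynomial.aeval_C,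
      eq_intCast] at h
    push_cast at h
    linear_combination h
  set γ : qF 2 29 := -(qgen 2 29) ^ 2 / 4 + (qgen 2 29) / 2 - 29 / 4 with hγ
  set fγ : ℤ[X] := X ^ 4 + (C 29 * X + C 203) with hfγ
  obtain ⟨hmonγ, hdegγ⟩ := quartic_monic_natDegree (R := ℤ) (lin_degree_lt 29 203)
  have hrootγ : Polynomial.aeval γ fγ = 0 := by
    rw [hfγ, hγ]
    simp only [map_add, map_mul, map_pow, map_ofNat, Polynomial.aeval_X, Polynomial.aeval_C,
      eq_intCast]
    push_cast
    linear_combination ((qgen 2 29) ^ 4 / 256 - (qgen 2 29) ^ 3 / 32 + 82 * (qgen 2 29) ^ 2 / 256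
      - 264 * (qgen 2 29) / 256 + 973 / 256) * hgK
  have hmap : fγ.map (Int.castRingHom (ZMod 2)) = X ^ 4 + X + 1 := by
    rw [hfγ]
    simp only [Polynomial.map_add, Polynomial.map_mul, Polynomial.map_pow, Polynomial.map_X,
      Polynomial.map_C]
    rw [show ((Int.castRingHom (ZMod 2)) 29 : ZMod 2) = 1 by decide,
      show ((Int.castRingHom (ZMod 2)) 203 : ZMod 2) = 1 by decide, Polynomial.C_1]
    ring
  have hirrγ2 : Irreducible (fγ.map (Int.castRingHom (ZMod 2))) := by
    rw [hmap]; exact irreducible_X4_X_1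
  exact inert_existsUnique 2 29 fm fγ hmonm hdegm hirrm hrootm hmonγ hdegγ hirrγ2 γ hrootγ

/-- For each of the three fields `F = ℚ(√(−(2 + √2)))`,
`F = ℚ(√(−(13 + 2√13)))` and `F = ℚ(√(−(29 + 2√29)))`, there is exactly one prime ideal of
the ring of integers `O_F` lying above the rational prime `2`. -/
theorem statement18 :
    (∃! P : Ideal (𝓞 (qF 1 2)), LiesAboveTwo P) ∧
    (∃! P : Ideal (𝓞 (qF 2 13)), LiesAboveTwo P) ∧
    (∃! P : Ideal (𝓞 (qF 2 29)), LiesAboveTwo P) :=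
  ⟨ram_existsUnique, case13_existsUnique, case29_existsUnique⟩
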